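/- Every full subgraph of an admissible simplicial graph is admissible. That is, if Γ is an admissible simplicial graph and A ⊆ V(Γ), then the full subgraph Γ_A of Γ spanned by A is admissible. -/

import Mathlib

namespace QM

variable {ι : Type*}

/-- The defining relators of the graph product: the multiplication tables of the vertex
groups and the commutators between adjacent vertex groups. -/
def gpRels (Γ : SimpleGraph ι) (Gv : ι → Type*) [∀ v, Group (Gv v)] :
    Set (FreeGroup (Σ v : ι, Gv v)) :=
  {r | (∃ (v : ι) (g h : Gv v),
          r = FreeGroup.of (⟨v, g⟩ : Σ v, Gv v) * FreeGroup.of (⟨v, h⟩ : Σ v, Gv v) *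
              (FreeGroup.of (⟨v, g * h⟩ : Σ v, Gv v))⁻¹) ∨
       (∃ (v w : ι) (g : Gv v) (h : Gv w), Γ.Adj v w ∧
          r = FreeGroup.of (⟨v, g⟩ : Σ v, Gv v) * FreeGroup.of (⟨w, h⟩ : Σ v, Gv v) *
              (FreeGroup.of (⟨v, g⟩ : Σ v, Gv v))⁻¹ * (FreeGroup.of (⟨w, h⟩ : Σ v, Gv v))⁻¹)}

/-- The graph product of the groups `Gv v` over the simplicial graph `Γ`. -/
def GraphProduct (Γ : SimpleGraph ι) (Gv : ι → Type*) [∀ v, Group (Gv v)] :=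
  PresentedGroup (gpRels Γ Gv)

instance (Γ : SimpleGraph ι) (Gv : ι → Type*) [∀ v, Group (Gv v)] :
    Group (GraphProduct Γ Gv) := by
  unfold GraphProduct; infer_instance

/-- The canonical image of an element of a vertex group in the graph product. -/
def gpOf (Γ : SimpleGraph ι) (Gv : ι → Type*) [∀ v, Group (Gv v)] (v : ι) (g : Gv v) :
    GraphProduct Γ Gv :=
  PresentedGroup.of (⟨v, g⟩ : Σ v, Gv v)

/-- The Cayley graph of the graph product `Γ𝒢` with respect to the generating set consisting
of all non-identity elements of the vertex groups (with edges `(x, s·x)`). -/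
def gpCayley (Γ : SimpleGraph ι) (Gv : ι → Type*) [∀ v, Group (Gv v)] :
    SimpleGraph (GraphProduct Γ Gv) :=
  SimpleGraph.fromRel (fun x y => ∃ (v : ι) (g : Gv v), g ≠ 1 ∧ y = gpOf Γ Gv v g * x)

end QM

namespace QM

/-- The solution set in `G` of a system of equations `S ⊆ F_n`. -/
def solutionSet (G : Type*) [Group G] {n : ℕ} (S : Set (FreeGroup (Fin n))) :
    Set (Fin n → G) :=
  {g : Fin n → G | ∀ s ∈ S, FreeGroup.lift g s = 1}

/-- A group is equationally noetherian if every system of equations is equivalent to a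
finite subsystem. -/
def IsEquationallyNoetherian (G : Type*) [Group G] : Prop :=
  ∀ (n : ℕ) (S : Set (FreeGroup (Fin n))), ∃ S₀ : Set (FreeGroup (Fin n)),
    S₀ ⊆ S ∧ S₀.Finite ∧ solutionSet G S₀ = solutionSet G S

end QM

namespace QM

universe u

/-- The subgroup of the graph product generated by the vertex groups `G_w` with `w`
adjacent to `v` (the "link subgroup" of `v`). -/
def linkSubgroup {ι : Type*} (Γ : SimpleGraph ι) (Gv : ι → Type*) [∀ v, Group (Gv v)]
    (v : ι) : Subgroup (GraphProduct Γ Gv) :=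
  Subgroup.closure {x : GraphProduct Γ Gv | ∃ (w : ι) (g : Gv w), Γ.Adj v w ∧ x = gpOf Γ Gv w g}

/-- A homomorphism from a finitely generated free group (with its standard basis) to a
graph product is linking if each basis element is sent into a link subgroup. -/
def IsLinking {ι : Type*} (Γ : SimpleGraph ι) (Gv : ι → Type*) [∀ v, Group (Gv v)]
    {m : ℕ} (φ : FreeGroup (Fin m) →* GraphProduct Γ Gv) : Prop :=
  ∀ s : Fin m, ∃ v : ι, φ (FreeGroup.of s) ∈ linkSubgroup Γ Gv v

/-- A simplicial graph `Γ` is admissible (with respect to the ultrafilter `ω`) if for every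
collection of non-trivial equationally noetherian vertex groups and every sequence of
linking homomorphisms `φᵢ : F → Γ𝒢` from a finitely generated free group, the `φᵢ` factor
through the `ω`-kernel `F_ω = {f | φᵢ(f) = 1 ω-almost surely}` `ω`-almost surely. -/
def IsAdmissible {ι : Type*} (Γ : SimpleGraph ι) (ω : Ultrafilter ℕ) : Prop :=
  ∀ (Gv : ι → Type u) [∀ v, Group (Gv v)],
    (∀ v, Nontrivial (Gv v)) → (∀ v, IsEquationallyNoetherian (Gv v)) →
    ∀ (m : ℕ) (φ : ℕ → (FreeGroup (Fin m) →* GraphProduct Γ Gv)),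
      (∀ i, IsLinking Γ Gv (φ i)) →
      {i : ℕ | ∀ f : FreeGroup (Fin m), {j : ℕ | φ j f = 1} ∈ ω → φ i f = 1} ∈ ω

end QM

namespace QM

section Aux

universe u

variable {ι : Type*}

/-- Relators of a graph product vanish in the graph product. -/
theorem gpRel_eq_one (Γ : SimpleGraph ι) (Gv : ι → Type*) [∀ v, Group (Gv v)]
    {r : FreeGroup (Σ v, Gv v)} (hr : r ∈ gpRels Γ Gv) :
    (PresentedGroup.mk (gpRels Γ Gv) r : GraphProduct Γ Gv) = 1 :=
  (QuotientGroup.eq_one_iff r).mpr (Subgroup.subset_normalClosure hr)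

theorem gpOf_mul (Γ : SimpleGraph ι) (Gv : ι → Type*) [∀ v, Group (Gv v)] (v : ι)
    (g h : Gv v) : gpOf Γ Gv v g * gpOf Γ Gv v h = gpOf Γ Gv v (g * h) := by
  have := gpRel_eq_one Γ Gv (Or.inl ⟨v, g, h, rfl⟩)
  simp [map_mul, map_inv, mul_inv_eq_one, gpOf, PresentedGroup.of] at this
  exact this

theorem gpOf_comm (Γ : SimpleGraph ι) (Gv : ι → Type*) [∀ v, Group (Gv v)] {v w : ι}
    (hadj : Γ.Adj v w) (g : Gv v) (h : Gv w) :
    gpOf Γ Gv v g * gpOf Γ Gv w h * (gpOf Γ Gv v g)⁻¹ * (gpOf Γ Gv w h)⁻¹ = 1 := by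
  have := gpRel_eq_one Γ Gv (Or.inr ⟨v, w, g, h, hadj, rfl⟩)
  simp [map_mul, map_inv, gpOf, PresentedGroup.of] at this
  exact this

/-- A `MulEquiv` obtained from an equality of groups-as-sigma-pairs. -/
def castMulEquiv {α β : Type u} [iα : Group α] [iβ : Group β]
    (h : (⟨α, iα⟩ : Σ T : Type u, Group T) = ⟨β, iβ⟩) : α ≃* β := by
  obtain ⟨h1, h2⟩ := Sigma.mk.inj_iff.mp h
  subst h1
  obtain rfl := eq_of_heq h2
  exact MulEquiv.refl α

/-- Equationally noetherian transports along group isomorphisms. -/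
theorem isEqNoeth_of_mulEquiv {G H : Type*} [Group G] [Group H] (e : G ≃* H)
    (hG : IsEquationallyNoetherian G) : IsEquationallyNoetherian H := by
  intro n S
  obtain ⟨S₀, hsub, hfin, hsol⟩ := hG n S
  have key : ∀ (T : Set (FreeGroup (Fin n))) (g : Fin n → H),
      g ∈ solutionSet H T ↔ (fun i => e.symm (g i)) ∈ solutionSet G T := by
    intro T g
    have hlift : ∀ s : FreeGroup (Fin n),
        FreeGroup.lift (fun i => e.symm (g i)) s = e.symm (FreeGroup.lift g s) := by
      intro s
      have : FreeGroup.lift (fun i => e.symm (g i)) =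
          (e.symm.toMonoidHom.comp (FreeGroup.lift g)) := by
        ext x
        simp
      rw [this]
      rfl
    constructor
    · intro hg s hs
      rw [hlift s, hg s hs, map_one]
    · intro hg s hs
      have := hg s hs
      rw [hlift s] at this
      have := congrArg e this
      simpa using this
  refine ⟨S₀, hsub, hfin, ?_⟩
  ext g
  show g ∈ solutionSet H S₀ ↔ g ∈ solutionSet H S
  rw [key S₀ g, key S g, hsol]

/-- Every finite group is equationally noetherian. -/
theorem isEqNoeth_of_finite (G : Type*) [Group G] [Finite G] :
    IsEquationallyNoetherian G := by
  intro n S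
  set K : Set ℕ := {k | ∃ T : Set (FreeGroup (Fin n)), T ⊆ S ∧ T.Finite ∧
    (solutionSet G T).ncard = k} with hK
  have hKne : K.Nonempty := ⟨(solutionSet G ∅).ncard, ∅, by simp, Set.finite_empty, rfl⟩
  obtain ⟨T, hTS, hTfin, hTcard⟩ := Nat.sInf_mem hKne
  refine ⟨T, hTS, hTfin, ?_⟩
  apply Set.Subset.antisymm
  · intro g hg s hs
    have h1 : solutionSet G (T ∪ {s}) ⊆ solutionSet G T :=
      fun x hx s' hs' => hx s' (Or.inl hs')
    have h2 : (solutionSet G T).ncard ≤ (solutionSet G (T ∪ {s})).ncard := by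
      rw [hTcard]
      exact Nat.sInf_le ⟨T ∪ {s}, Set.union_subset hTS (by simpa using hs),
        hTfin.union (Set.finite_singleton s), rfl⟩
    have heq : solutionSet G (T ∪ {s}) = solutionSet G T :=
      Set.eq_of_subset_of_ncard_le h1 h2 (Set.toFinite _)
    have hg' : g ∈ solutionSet G (T ∪ {s}) := heq ▸ hg
    exact hg' s (Or.inr rfl)
  · intro g hg s hs
    exact hg s (hTS hs)

variable (Γ : SimpleGraph ι) (A : Set ι) (Gv : ↥A → Type u) [∀ v, Group (Gv v)]

open Classical in
/-- Extension of a family of groups on `A` to all of `ι`, packaged with group structures. -/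
noncomputable def extFam : ι → Σ T : Type u, Group T := fun v =>
  if h : v ∈ A then ⟨Gv ⟨v, h⟩, inferInstance⟩
  else ⟨ULift.{u} (Multiplicative (ZMod 2)), inferInstance⟩

/-- The extended family of groups. -/
noncomputable def Ext : ι → Type u := fun v => (extFam A Gv v).1

noncomputable instance extGroup (v : ι) : Group (Ext A Gv v) := (extFam A Gv v).2

theorem extFam_pos (v : ↥A) :
    (⟨Gv v, inferInstance⟩ : Σ T : Type u, Group T) = ⟨Ext A Gv ↑v, inferInstance⟩ := by
  show _ = extFam A Gv ↑v
  unfold extFam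
  rw [dif_pos v.2]

theorem extFam_neg (v : ι) (h : v ∉ A) :
    (⟨ULift.{u} (Multiplicative (ZMod 2)), inferInstance⟩ : Σ T : Type u, Group T)
      = ⟨Ext A Gv v, inferInstance⟩ := by
  show _ = extFam A Gv v
  unfold extFam
  rw [dif_neg h]

/-- Identification of a vertex group with the corresponding extended group. -/
noncomputable def extEquiv (v : ↥A) : Gv v ≃* Ext A Gv ↑v :=
  castMulEquiv (extFam_pos A Gv v)

/-- Identification of the filler group with the corresponding extended group. -/
noncomputable def extEquivNeg (v : ι) (h : v ∉ A) :
    ULift.{u} (Multiplicative (ZMod 2)) ≃* Ext A Gv v :=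
  castMulEquiv (extFam_neg A Gv v h)

theorem ext_nontrivial (hGv : ∀ v, Nontrivial (Gv v)) (v : ι) :
    Nontrivial (Ext A Gv v) := by
  by_cases h : v ∈ A
  · exact (extEquiv A Gv ⟨v, h⟩).symm.toEquiv.nontrivial
  · exact (extEquivNeg A Gv v h).symm.toEquiv.nontrivial

theorem ext_eqNoeth (hGv : ∀ v, IsEquationallyNoetherian (Gv v)) (v : ι) :
    IsEquationallyNoetherian (Ext A Gv v) := by
  by_cases h : v ∈ A
  · exact isEqNoeth_of_mulEquiv (extEquiv A Gv ⟨v, h⟩) (hGv ⟨v, h⟩)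
  · exact isEqNoeth_of_mulEquiv (extEquivNeg A Gv v h) (isEqNoeth_of_finite _)

/-- The canonical map from the graph product over the induced subgraph to the graph product
over the whole graph. -/
noncomputable def psi :
    GraphProduct (SimpleGraph.induce A Γ) Gv →* GraphProduct Γ (Ext A Gv) :=
  PresentedGroup.toGroup
    (f := fun x => gpOf Γ (Ext A Gv) ↑x.1 (extEquiv A Gv x.1 x.2)) (by
    rintro r (⟨v, g, h, rfl⟩ | ⟨v, w, g, h, hadj, rfl⟩)
    · simp only [map_mul, map_inv, FreeGroup.lift_apply_of, mul_inv_eq_one]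
      exact gpOf_mul _ _ _ _ _
    · simp only [map_mul, map_inv, FreeGroup.lift_apply_of]
      exact gpOf_comm Γ (Ext A Gv) hadj (extEquiv A Gv v g) (extEquiv A Gv w h))

theorem psi_of (x : Σ v : ↥A, Gv v) :
    psi Γ A Gv (PresentedGroup.of x) = gpOf Γ (Ext A Gv) ↑x.1 (extEquiv A Gv x.1 x.2) :=
  PresentedGroup.toGroup.of _

open Classical in
/-- The retraction from the graph product over the whole graph onto the graph product over
the induced subgraph, killing the vertex groups outside `A`. -/
noncomputable def rho :
    GraphProduct Γ (Ext A Gv) →* GraphProduct (SimpleGraph.induce A Γ) Gv :=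
  PresentedGroup.toGroup
    (f := fun x => if h : x.1 ∈ A then
        gpOf (SimpleGraph.induce A Γ) Gv ⟨x.1, h⟩ ((extEquiv A Gv ⟨x.1, h⟩).symm x.2)
      else 1) (by
    rintro r (⟨v, g, h, rfl⟩ | ⟨v, w, g, h, hadj, rfl⟩)
    · simp only [map_mul, map_inv, FreeGroup.lift_apply_of, mul_inv_eq_one]
      by_cases hv : v ∈ A
      · simp only [dif_pos hv]
        exact gpOf_mul _ _ _ _ _
      · simp [dif_neg hv]
    · simp only [map_mul, map_inv, FreeGroup.lift_apply_of]
      by_cases hv : v ∈ A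
      · by_cases hw : w ∈ A
        · simp only [dif_pos hv, dif_pos hw]
          exact gpOf_comm (SimpleGraph.induce A Γ) Gv
            (by simpa using hadj) _ _
        · simp [dif_pos hv, dif_neg hw]
      · by_cases hw : w ∈ A
        · simp [dif_neg hv, dif_pos hw]
        · simp [dif_neg hv, dif_neg hw])

theorem rho_psi (x : GraphProduct (SimpleGraph.induce A Γ) Gv) :
    rho Γ A Gv (psi Γ A Gv x) = x := by
  have hx : x ∈ MonoidHom.eqLocus ((rho Γ A Gv).comp (psi Γ A Gv))
      (MonoidHom.id (GraphProduct (SimpleGraph.induce A Γ) Gv)) := by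
    refine PresentedGroup.generated_by _ _ ?_ x
    intro y
    show rho Γ A Gv (psi Γ A Gv (PresentedGroup.of y)) = PresentedGroup.of y
    rw [psi_of]
    show rho Γ A Gv
        (PresentedGroup.of (⟨↑y.1, extEquiv A Gv y.1 y.2⟩ : Σ v, Ext A Gv v)) = _
    unfold rho
    refine (PresentedGroup.toGroup.of _).trans ?_
    rw [dif_pos y.1.2]
    exact congrArg (gpOf (SimpleGraph.induce A Γ) Gv y.1)
      ((extEquiv A Gv y.1).symm_apply_apply y.2)
  exact hx

theorem psi_injective_one {x : GraphProduct (SimpleGraph.induce A Γ) Gv}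
    (hx : psi Γ A Gv x = 1) : x = 1 := by
  have := congrArg (rho Γ A Gv) hx
  rwa [rho_psi, map_one] at this

theorem psi_link (v : ↥A) {x : GraphProduct (SimpleGraph.induce A Γ) Gv}
    (hx : x ∈ linkSubgroup (SimpleGraph.induce A Γ) Gv v) :
    psi Γ A Gv x ∈ linkSubgroup Γ (Ext A Gv) ↑v := by
  have hmem : psi Γ A Gv x ∈ Subgroup.map (psi Γ A Gv)
      (linkSubgroup (SimpleGraph.induce A Γ) Gv v) := ⟨x, hx, rfl⟩
  rw [linkSubgroup, MonoidHom.map_closure] at hmem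
  refine Subgroup.closure_mono ?_ hmem
  rintro _ ⟨_, ⟨w, g, hadj, rfl⟩, rfl⟩
  refine ⟨↑w, extEquiv A Gv w g, by simpa using hadj, ?_⟩
  exact psi_of Γ A Gv ⟨w, g⟩

end Aux

/-- **Lemma.** Every full subgraph of an admissible simplicial graph is admissible. -/
theorem induce_admissible {ι : Type*} (Γ : SimpleGraph ι) (ω : Ultrafilter ℕ)
    (hω : ∀ a : ℕ, (ω : Filter ℕ) ≠ pure a) (hadm : IsAdmissible.{u} Γ ω) (A : Set ι) :
    IsAdmissible.{u} (SimpleGraph.induce A Γ) ω := by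
  intro Gv _ hnt hen m φ hlink
  have hset := hadm (Ext A Gv) (ext_nontrivial A Gv hnt) (ext_eqNoeth A Gv hen) m
    (fun i => (psi Γ A Gv).comp (φ i))
    (fun i s => by
      obtain ⟨v, hv⟩ := hlink i s
      exact ⟨↑v, psi_link Γ A Gv v hv⟩)
  refine Filter.mem_of_superset hset ?_
  intro i hi f hf
  have hsub : {j | φ j f = 1} ⊆ {j | ((psi Γ A Gv).comp (φ j)) f = 1} := by
    intro j hj
    simp only [Set.mem_setOf_eq] at hj ⊢
    rw [MonoidHom.comp_apply, hj, map_one]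
  exact psi_injective_one Γ A Gv (hi f (Filter.mem_of_superset hf hsub))

end QM
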